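/- Let N ≥ 3 and let M ≥ 3 be an integer divisible by (7^{N+1})!. Let I_1 be the OOEBP instance consisting of, in order, M items of size 1/7^i for i = N, N−1, …, 1. Let J_3 be I_1 followed by M items of size 1/3; J_2 be J_3 followed by M items of size 1/2; J_22 be J_3 followed by 2M items of size 1/2; and J_1 be J_2 followed by M items of size 1. Then OPT(J_3) ≤ 3M/8, OPT(J_2) ≤ 2M/3, OPT(J_22) ≤ M, and OPT(J_1) ≤ M. -/

import Mathlib

open scoped BigOperators Classical

namespace OOEBP

noncomputable section

/-- Load of bin `b` under packing `p` of instance `s`. -/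
def binLoad (s : List ℝ) (p : ℕ → ℕ) (b : ℕ) : ℝ :=
  ∑ j ∈ Finset.range s.length, if p j = b then s.getD j 0 else 0

/-- A packing is feasible if each item is placed into a bin whose current
load (total size of earlier items in the same bin) is strictly below 1. -/
def Feasible (s : List ℝ) (p : ℕ → ℕ) : Prop :=
  ∀ i < s.length,
    (∑ j ∈ Finset.range i, if p j = p i then s.getD j 0 else 0) < 1

/-- The cost of a packing: the number of nonempty bins. -/
def cost (s : List ℝ) (p : ℕ → ℕ) : ℕ :=
  ((Finset.range s.length).image p).card

/-- Optimal cost of a feasible packing of `s`. -/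
def OPT (s : List ℝ) : ℕ :=
  sInf {m | ∃ p, Feasible s p ∧ cost s p = m}

/-- Item `i` is the exceeding item of its bin: the bin's total size is at
least 1 and `i` is the item of maximum index in its bin. -/
def IsExceeding (s : List ℝ) (p : ℕ → ℕ) (i : ℕ) : Prop :=
  i < s.length ∧ 1 ≤ binLoad s p (p i) ∧
    ∀ j, i < j → j < s.length → p j ≠ p i
/-- The instance `I_k`: `M` items of size `1/7^N`, then `M` items of size
`1/7^{N−1}`, …, then `M` items of size `1/7^k`, in this order. -/
def instI (M N k : ℕ) : List ℝ :=
  (List.range (N - k + 1)).flatMap fun j => List.replicate M ((1 : ℝ) / 7 ^ (N - j))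

lemma sum_range_mul (f : ℕ → ℝ) (n m : ℕ) :
    ∑ j ∈ Finset.range (n * m), f j
      = ∑ k ∈ Finset.range n, ∑ r ∈ Finset.range m, f (k * m + r) := by
  induction n with
  | zero => simp
  | succ n ih =>
      rw [Nat.succ_mul, Finset.sum_range_add, ih, Finset.sum_range_succ]

def blocks (vs : List ℝ) (M : ℕ) : List ℝ := vs.flatMap (fun v => List.replicate M v)

lemma blocks_cons (v : ℝ) (vs : List ℝ) (M : ℕ) :
    blocks (v :: vs) M = List.replicate M v ++ blocks vs M := by
  simp [blocks]

lemma length_blocks (vs : List ℝ) (M : ℕ) : (blocks vs M).length = vs.length * M := by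
  induction vs with
  | nil => simp [blocks]
  | cons v vs ih =>
      rw [blocks_cons, List.length_append, List.length_replicate, ih, List.length_cons,
        Nat.succ_mul]
      omega

lemma getD_blocks (vs : List ℝ) (M : ℕ) (hM : 0 < M) (i : ℕ) (hi : i < vs.length * M) :
    (blocks vs M).getD i 0 = vs.getD (i / M) 0 := by
  induction vs generalizing i with
  | nil => simp at hi
  | cons v vs ih =>
      rw [blocks_cons]
      rcases lt_or_ge i M with h | h
      · rw [List.getD_append _ _ _ _ (by simpa using h), Nat.div_eq_of_lt h]
        simp [List.getD, List.getElem?_replicate, h]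
      · rw [List.getD_append_right _ _ _ _ (by simpa using h)]
        simp only [List.length_replicate]
        have hi' : i - M < vs.length * M := by
          rw [List.length_cons, Nat.succ_mul] at hi; omega
        rw [ih (i - M) hi']
        have h2 : i / M = (i - M) / M + 1 := by
          conv_lhs => rw [show i = i - M + M from by omega]
          rw [Nat.add_div_right _ hM]
        rw [h2]
        simp [List.getD_cons_succ]

lemma blocks_append (vs ws : List ℝ) (M : ℕ) :
    blocks (vs ++ ws) M = blocks vs M ++ blocks ws M := by
  simp [blocks]

lemma blocks_singleton (a : ℝ) (M : ℕ) : blocks [a] M = List.replicate M a := by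
  simp [blocks]

def pack (M P H : ℕ) (g : ℕ → ℕ → ℕ) (i : ℕ) : ℕ :=
  g (i / M) (i % M % P) * H + i % M / P

lemma mul_add_eq_iff {a b t t₀ H : ℕ} (ht : t < H) (ht₀ : t₀ < H) :
    a * H + t = b * H + t₀ ↔ t = t₀ ∧ a = b := by
  constructor
  · intro h
    have h' : (t + a * H) % H = (t₀ + b * H) % H := by
      rw [add_comm t, add_comm t₀]; exact congrArg (· % H) h
    rw [Nat.add_mul_mod_self_right, Nat.add_mul_mod_self_right,
      Nat.mod_eq_of_lt ht, Nat.mod_eq_of_lt ht₀] at h'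
    subst h'
    have h2 : a * H = b * H := by omega
    have h3 : a = b := Nat.eq_of_mul_eq_mul_right (by omega) h2
    exact ⟨rfl, h3⟩
  · rintro ⟨rfl, rfl⟩; rfl

lemma sum_range_mul' (g : ℕ → ℝ) (p h : ℕ) :
    ∑ r ∈ Finset.range (p * h), g r
      = ∑ t ∈ Finset.range h, ∑ u ∈ Finset.range p, g (t * p + u) := by
  rw [Nat.mul_comm, sum_range_mul]

lemma sum_range_mul3 (f : ℕ → ℝ) (n p h : ℕ) :
    ∑ j ∈ Finset.range (n * (p * h)), f j
      = ∑ k ∈ Finset.range n, ∑ t ∈ Finset.range h, ∑ u ∈ Finset.range p,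
          f (k * (p * h) + (t * p + u)) := by
  rw [sum_range_mul]
  exact Finset.sum_congr rfl fun k _ => sum_range_mul' (fun r => f (k * (p * h) + r)) p h

lemma binLoad_pack (vs : List ℝ) (P H : ℕ) (hP : 0 < P) (hH : 0 < H) (g : ℕ → ℕ → ℕ)
    (c t₀ : ℕ) (ht : t₀ < H) :
    binLoad (blocks vs (P * H)) (pack (P * H) P H g) (c * H + t₀)
      = ∑ k ∈ Finset.range vs.length, ∑ u ∈ Finset.range P,
          (if g k u = c then vs.getD k 0 else 0) := by
  have hM : 0 < P * H := Nat.mul_pos hP hH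
  rw [binLoad, length_blocks, sum_range_mul3]
  apply Finset.sum_congr rfl
  intro k hk
  rw [Finset.mem_range] at hk
  have key : ∀ t ∈ Finset.range H, ∀ u ∈ Finset.range P,
      (if pack (P * H) P H g (k * (P * H) + (t * P + u)) = c * H + t₀
        then (blocks vs (P * H)).getD (k * (P * H) + (t * P + u)) 0 else 0)
      = (if t = t₀ then (if g k u = c then vs.getD k 0 else 0) else 0) := by
    intro t htH u hu
    rw [Finset.mem_range] at htH hu
    have hr : t * P + u < P * H := by
      have h1 : t * P + u < (t + 1) * P := by
        rw [Nat.add_mul, Nat.one_mul]; omega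
      have h2 : (t + 1) * P ≤ H * P := Nat.mul_le_mul_right _ (by omega)
      rw [Nat.mul_comm P H]; omega
    have heq : k * (P * H) + (t * P + u) = (t * P + u) + k * (P * H) := by ring
    have hjlt : k * (P * H) + (t * P + u) < vs.length * (P * H) := by
      have : k + 1 ≤ vs.length := hk
      calc k * (P * H) + (t * P + u) < k * (P * H) + P * H := by omega
        _ = (k + 1) * (P * H) := by ring
        _ ≤ vs.length * (P * H) := Nat.mul_le_mul_right _ this
    have hdiv : (k * (P * H) + (t * P + u)) / (P * H) = k := by
      rw [heq, Nat.add_mul_div_right _ _ hM, Nat.div_eq_of_lt hr, Nat.zero_add]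
    have hmod : (k * (P * H) + (t * P + u)) % (P * H) = t * P + u := by
      rw [heq, Nat.add_mul_mod_self_right, Nat.mod_eq_of_lt hr]
    have hmodP : (t * P + u) % P = u := by
      rw [Nat.add_comm, Nat.add_mul_mod_self_right, Nat.mod_eq_of_lt hu]
    have hdivP : (t * P + u) / P = t := by
      rw [Nat.add_comm, Nat.add_mul_div_right _ _ hP, Nat.div_eq_of_lt hu, Nat.zero_add]
    have hpack : pack (P * H) P H g (k * (P * H) + (t * P + u)) = g k u * H + t := by
      rw [pack, hdiv, hmod, hmodP, hdivP]
    have hgetD : (blocks vs (P * H)).getD (k * (P * H) + (t * P + u)) 0 = vs.getD k 0 := by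
      rw [getD_blocks vs (P * H) hM _ hjlt, hdiv]
    rw [hpack, hgetD]
    have hiff : (g k u * H + t = c * H + t₀) ↔ (t = t₀ ∧ g k u = c) :=
      mul_add_eq_iff htH ht
    simp only [hiff, ite_and]
  rw [Finset.sum_congr rfl (fun t htH => Finset.sum_congr rfl (fun u hu => key t htH u hu))]
  rw [Finset.sum_comm]
  apply Finset.sum_congr rfl
  intro u _
  rw [Finset.sum_ite_eq' (Finset.range H) t₀]
  simp [ht]

lemma feasible_of (s : List ℝ) (p : ℕ → ℕ)
    (h0 : ∀ j, 0 ≤ s.getD j 0)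
    (h : ∀ i < s.length, ∃ j, i ≤ j ∧ j < s.length ∧ p j = p i ∧
         binLoad s p (p i) < 1 + s.getD j 0) :
    Feasible s p := by
  intro i hi
  obtain ⟨j, hij, hjlen, hpj, hlt⟩ := h i hi
  have key : binLoad s p (p i)
      = (∑ j ∈ Finset.range i, if p j = p i then s.getD j 0 else 0)
      + ∑ j ∈ Finset.Ico i s.length, (if p j = p i then s.getD j 0 else 0) := by
    rw [binLoad, Finset.range_eq_Ico,
      ← Finset.sum_Ico_consecutive _ (Nat.zero_le i) (le_of_lt hi), ← Finset.range_eq_Ico]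
  have hsingle : s.getD j 0
      ≤ ∑ j ∈ Finset.Ico i s.length, (if p j = p i then s.getD j 0 else 0) := by
    have hmem : j ∈ Finset.Ico i s.length := Finset.mem_Ico.mpr ⟨hij, hjlen⟩
    have := Finset.single_le_sum (f := fun j => if p j = p i then s.getD j 0 else 0)
      (fun k _ => by split_ifs; exacts [h0 k, le_rfl]) hmem
    simpa [hpj] using this
  linarith

lemma OPT_le (s : List ℝ) (p : ℕ → ℕ) (B : ℕ) (hf : Feasible s p)
    (hb : ∀ i < s.length, p i < B) : OPT s ≤ B := by
  have h1 : OPT s ≤ cost s p := Nat.sInf_le ⟨p, hf, rfl⟩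
  have h2 : cost s p ≤ B := by
    have hsub : (Finset.range s.length).image p ⊆ Finset.range B := by
      intro b hb'
      simp only [Finset.mem_image, Finset.mem_range] at hb' ⊢
      obtain ⟨i, hi, rfl⟩ := hb'
      exact hb i hi
    calc cost s p ≤ (Finset.range B).card := Finset.card_le_card hsub
    _ = B := Finset.card_range B
  omega

lemma getD_nonneg {l : List ℝ} (h : ∀ x ∈ l, 0 ≤ x) (k : ℕ) : 0 ≤ l.getD k 0 := by
  rcases lt_or_ge k l.length with hk | hk
  · rw [List.getD_eq_getElem l 0 hk]
    exact h _ (List.getElem_mem hk)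
  · rw [List.getD_eq_default _ _ hk]

lemma blocks_nonneg {vs : List ℝ} (M : ℕ) (h : ∀ x ∈ vs, 0 ≤ x) :
    ∀ x ∈ blocks vs M, 0 ≤ x := by
  intro x hx
  rw [blocks, List.mem_flatMap] at hx
  obtain ⟨v, hv, hx⟩ := hx
  rw [List.eq_of_mem_replicate hx]
  exact h v hv

lemma OPT_blocks_le (vs : List ℝ) (P H R : ℕ) (hP : 0 < P) (hH : 0 < H)
    (g : ℕ → ℕ → ℕ) (hg : ∀ k u, g k u < R)
    (h0 : ∀ x ∈ vs, 0 ≤ x)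
    (hlast : ∀ i < vs.length * (P * H), ∃ j, i ≤ j ∧ j < vs.length * (P * H) ∧
        pack (P * H) P H g j = pack (P * H) P H g i ∧
        (∑ k ∈ Finset.range vs.length, ∑ u ∈ Finset.range P,
          (if g k u = g (i / (P * H)) (i % (P * H) % P) then vs.getD k 0 else 0))
          < 1 + vs.getD (j / (P * H)) 0) :
    OPT (blocks vs (P * H)) ≤ R * H := by
  have hM : 0 < P * H := Nat.mul_pos hP hH
  have hlen : (blocks vs (P * H)).length = vs.length * (P * H) := length_blocks _ _
  have hnn : ∀ j, 0 ≤ (blocks vs (P * H)).getD j 0 := getD_nonneg (blocks_nonneg _ h0)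
  apply OPT_le _ (pack (P * H) P H g) (R * H)
  · apply feasible_of _ _ hnn
    intro i hi
    rw [hlen] at hi
    obtain ⟨j, hij, hjlt, hpj, hsum⟩ := hlast i hi
    refine ⟨j, hij, by rw [hlen]; exact hjlt, hpj, ?_⟩
    have ht₀ : i % (P * H) / P < H := by
      rw [Nat.div_lt_iff_lt_mul hP, Nat.mul_comm H P]
      exact Nat.mod_lt i hM
    have hpi : pack (P * H) P H g i
        = g (i / (P * H)) (i % (P * H) % P) * H + i % (P * H) / P := rfl
    rw [hpi, binLoad_pack vs P H hP hH g _ _ ht₀,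
      getD_blocks vs (P * H) hM j hjlt]
    exact hsum
  · intro i hi
    have ht₀ : i % (P * H) / P < H := by
      rw [Nat.div_lt_iff_lt_mul hP, Nat.mul_comm H P]
      exact Nat.mod_lt i hM
    have hgi : g (i / (P * H)) (i % (P * H) % P) + 1 ≤ R := hg _ _
    calc pack (P * H) P H g i
        = g (i / (P * H)) (i % (P * H) % P) * H + i % (P * H) / P := rfl
      _ < g (i / (P * H)) (i % (P * H) % P) * H + H := by omega
      _ = (g (i / (P * H)) (i % (P * H) % P) + 1) * H := by ring
      _ ≤ R * H := Nat.mul_le_mul_right _ hgi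

lemma core (vs : List ℝ) (P H : ℕ) (hP : 0 < P) (hH : 0 < H) (g : ℕ → ℕ → ℕ) (L : ℕ)
    (hvl : vs.length = L + 1)
    (i : ℕ) (hi : i < vs.length * (P * H))
    (e : ℕ) (he : e < P)
    (hge : g L e = g (i / (P * H)) (i % (P * H) % P))
    (hue : i / (P * H) = L → i % (P * H) % P ≤ e)
    (hsum : (∑ k ∈ Finset.range vs.length, ∑ u ∈ Finset.range P,
        (if g k u = g (i / (P * H)) (i % (P * H) % P) then vs.getD k 0 else 0))
        < 1 + vs.getD L 0) :
    ∃ j, i ≤ j ∧ j < vs.length * (P * H) ∧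
      pack (P * H) P H g j = pack (P * H) P H g i ∧
      (∑ k ∈ Finset.range vs.length, ∑ u ∈ Finset.range P,
        (if g k u = g (i / (P * H)) (i % (P * H) % P) then vs.getD k 0 else 0))
        < 1 + vs.getD (j / (P * H)) 0 := by
  have hM : 0 < P * H := Nat.mul_pos hP hH
  set M := P * H with hMdef
  have hr : i % M < M := Nat.mod_lt i hM
  have ht : i % M / P < H := by
    rw [Nat.div_lt_iff_lt_mul hP, Nat.mul_comm H P]; exact hr
  set t := i % M / P with htdef
  have hkL : i / M ≤ L := by
    have h1 : i / M < L + 1 := by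
      rw [Nat.div_lt_iff_lt_mul hM]
      rw [hvl] at hi; exact hi
    omega
  have hteP : t * P + e < M := by
    have h1 : t * P + e < (t + 1) * P := by rw [Nat.add_mul, Nat.one_mul]; omega
    have h2 : (t + 1) * P ≤ H * P := Nat.mul_le_mul_right _ (by omega)
    have h3 : H * P = M := Nat.mul_comm H P
    omega
  refine ⟨L * M + (t * P + e), ?_, ?_, ?_, ?_⟩
  · rcases eq_or_lt_of_le hkL with hk | hk
    · have hdm2 : P * t + i % M % P = i % M := Nat.div_add_mod (i % M) P
      have hue' : i % M % P ≤ e := hue hk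
      have hiM : i = L * M + i % M := by
        conv_lhs => rw [← Nat.div_add_mod i M]
        rw [hk, Nat.mul_comm]
      have hcomm : P * t = t * P := Nat.mul_comm P t
      omega
    · have h1 : i < L * M := (Nat.div_lt_iff_lt_mul hM).mp hk
      exact le_trans h1.le (Nat.le_add_right _ _)
  · rw [hvl, Nat.succ_mul]
    exact Nat.add_lt_add_left hteP _
  · have heq : L * M + (t * P + e) = (t * P + e) + L * M := by ring
    have hjdiv : (L * M + (t * P + e)) / M = L := by
      rw [heq, Nat.add_mul_div_right _ _ hM, Nat.div_eq_of_lt hteP, Nat.zero_add]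
    have hjmod : (L * M + (t * P + e)) % M = t * P + e := by
      rw [heq, Nat.add_mul_mod_self_right, Nat.mod_eq_of_lt hteP]
    have hemod : (t * P + e) % P = e := by
      rw [Nat.add_comm, Nat.add_mul_mod_self_right, Nat.mod_eq_of_lt he]
    have hediv : (t * P + e) / P = t := by
      rw [Nat.add_comm, Nat.add_mul_div_right _ _ hP, Nat.div_eq_of_lt he, Nat.zero_add]
    show g ((L * M + (t * P + e)) / M) ((L * M + (t * P + e)) % M % P) * H
        + (L * M + (t * P + e)) % M / P
      = g (i / M) (i % M % P) * H + i % M / P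
    rw [hjdiv, hjmod, hemod, hediv, hge]
  · have heq : L * M + (t * P + e) = (t * P + e) + L * M := by ring
    have hjdiv : (L * M + (t * P + e)) / M = L := by
      rw [heq, Nat.add_mul_div_right _ _ hM, Nat.div_eq_of_lt hteP, Nat.zero_add]
    rw [hjdiv]
    exact hsum

def sv (N : ℕ) : List ℝ := (List.range N).map (fun j => (1 : ℝ) / 7 ^ (N - j))

lemma length_sv (N : ℕ) : (sv N).length = N := by simp [sv]

def SS (N : ℕ) : ℝ := ∑ k ∈ Finset.range N, (1 : ℝ) / 7 ^ (N - k)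

lemma SS_nonneg (N : ℕ) : 0 ≤ SS N := by
  apply Finset.sum_nonneg; intro k _; positivity

lemma SS_lt (N : ℕ) : SS N < 1 / 6 := by
  have h1 : SS N = ∑ j ∈ Finset.range N, ((1 : ℝ) / 7) ^ (j + 1) := by
    rw [SS, ← Finset.sum_range_reflect]
    apply Finset.sum_congr rfl
    intro j hj
    rw [Finset.mem_range] at hj
    rw [show N - (N - 1 - j) = j + 1 from by omega, one_div_pow]
  have h2 : ∑ j ∈ Finset.range N, ((1 : ℝ) / 7) ^ (j + 1)
      = (1 / 7) * ∑ j ∈ Finset.range N, ((1 : ℝ) / 7) ^ j := by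
    rw [Finset.mul_sum]
    exact Finset.sum_congr rfl fun j _ => by rw [pow_succ]; ring
  have h3 : ∑ j ∈ Finset.range N, ((1 : ℝ) / 7) ^ j = (((1:ℝ)/7) ^ N - 1) / ((1:ℝ)/7 - 1) :=
    geom_sum_eq (by norm_num) N
  have h4 : (0 : ℝ) < ((1:ℝ)/7) ^ N := by positivity
  rw [h1, h2, h3]
  rw [show ((1:ℝ)/7 - 1) = -(6/7) from by norm_num, div_neg]
  rw [div_eq_mul_inv]
  nlinarith [h4]

lemma getD_sv {N k : ℕ} (hk : k < N) : (sv N).getD k 0 = 1 / 7 ^ (N - k) := by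
  rw [sv, List.getD_eq_getElem _ _ (by simpa using hk)]
  simp

lemma getD_sv_append {N k : ℕ} (L : List ℝ) (hk : k < N) :
    (sv N ++ L).getD k 0 = 1 / 7 ^ (N - k) := by
  rw [List.getD_append _ _ _ _ (by rw [length_sv]; exact hk), getD_sv hk]

lemma getD_sv_append' {N k : ℕ} (L : List ℝ) (hk : N ≤ k) :
    (sv N ++ L).getD k 0 = L.getD (k - N) 0 := by
  rw [List.getD_append_right _ _ _ _ (by rw [length_sv]; exact hk), length_sv]

def g3 (N k u : ℕ) : ℕ :=
  if k < N then (if u < 2 then 0 else if u < 4 then 1 else 2)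
  else (if u < 3 then 0 else if u < 6 then 1 else 2)

def g2 (N k u : ℕ) : ℕ :=
  if k ≤ N then (if u = 0 then 0 else 1) else (if u ≤ 1 then 0 else 1)

def g0 (k u : ℕ) : ℕ := 0

lemma g3_lt (N k u : ℕ) : g3 N k u < 3 := by
  rw [g3]; split_ifs <;> omega

lemma g2_lt (N k u : ℕ) : g2 N k u < 2 := by
  rw [g2]; split_ifs <;> omega

lemma g0_lt (k u : ℕ) : g0 k u < 1 := by rw [g0]; omega

lemma sum_sv_part (N : ℕ) (L : List ℝ) :
    ∑ k ∈ Finset.range N, (sv N ++ L).getD k 0 = SS N := by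
  rw [SS]
  exact Finset.sum_congr rfl fun k hk => getD_sv_append _ (Finset.mem_range.mp hk)

lemma sumJ3_0 (N : ℕ) :
    ∑ k ∈ Finset.range (N + 1), ∑ u ∈ Finset.range 8,
      (if g3 N k u = 0 then (sv N ++ [(1:ℝ)/3]).getD k 0 else 0) = 2 * SS N + 1 := by
  rw [Finset.sum_range_succ]
  have hN : (∑ u ∈ Finset.range 8,
      if g3 N N u = 0 then (sv N ++ [(1:ℝ)/3]).getD N 0 else 0) = 1 := by
    rw [getD_sv_append' _ le_rfl]
    norm_num [g3, Finset.sum_range_succ]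
  have hS : ∀ k ∈ Finset.range N,
      (∑ u ∈ Finset.range 8, if g3 N k u = 0 then (sv N ++ [(1:ℝ)/3]).getD k 0 else 0)
      = 2 * ((sv N ++ [(1:ℝ)/3]).getD k 0) := by
    intro k hk
    rw [Finset.mem_range] at hk
    norm_num [g3, hk, Finset.sum_range_succ]
    ring
  rw [Finset.sum_congr rfl hS, ← Finset.mul_sum, sum_sv_part, hN]

lemma sumJ3_1 (N : ℕ) :
    ∑ k ∈ Finset.range (N + 1), ∑ u ∈ Finset.range 8,
      (if g3 N k u = 1 then (sv N ++ [(1:ℝ)/3]).getD k 0 else 0) = 2 * SS N + 1 := by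
  rw [Finset.sum_range_succ]
  have hN : (∑ u ∈ Finset.range 8,
      if g3 N N u = 1 then (sv N ++ [(1:ℝ)/3]).getD N 0 else 0) = 1 := by
    rw [getD_sv_append' _ le_rfl]
    norm_num [g3, Finset.sum_range_succ]
  have hS : ∀ k ∈ Finset.range N,
      (∑ u ∈ Finset.range 8, if g3 N k u = 1 then (sv N ++ [(1:ℝ)/3]).getD k 0 else 0)
      = 2 * ((sv N ++ [(1:ℝ)/3]).getD k 0) := by
    intro k hk
    rw [Finset.mem_range] at hk
    norm_num [g3, hk, Finset.sum_range_succ]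
    ring
  rw [Finset.sum_congr rfl hS, ← Finset.mul_sum, sum_sv_part, hN]

lemma sumJ3_2 (N : ℕ) :
    ∑ k ∈ Finset.range (N + 1), ∑ u ∈ Finset.range 8,
      (if g3 N k u = 2 then (sv N ++ [(1:ℝ)/3]).getD k 0 else 0) = 4 * SS N + 2/3 := by
  rw [Finset.sum_range_succ]
  have hN : (∑ u ∈ Finset.range 8,
      if g3 N N u = 2 then (sv N ++ [(1:ℝ)/3]).getD N 0 else 0) = 2/3 := by
    rw [getD_sv_append' _ le_rfl]
    norm_num [g3, Finset.sum_range_succ]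
  have hS : ∀ k ∈ Finset.range N,
      (∑ u ∈ Finset.range 8, if g3 N k u = 2 then (sv N ++ [(1:ℝ)/3]).getD k 0 else 0)
      = 4 * ((sv N ++ [(1:ℝ)/3]).getD k 0) := by
    intro k hk
    rw [Finset.mem_range] at hk
    norm_num [g3, hk, Finset.sum_range_succ]
    ring
  rw [Finset.sum_congr rfl hS, ← Finset.mul_sum, sum_sv_part, hN]

lemma sumJ2_0 (N : ℕ) :
    ∑ k ∈ Finset.range (N + 2), ∑ u ∈ Finset.range 3,
      (if g2 N k u = 0 then (sv N ++ [(1:ℝ)/3, 1/2]).getD k 0 else 0)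
      = SS N + 1/3 + 1 := by
  rw [Finset.sum_range_succ, Finset.sum_range_succ]
  have hN1 : (∑ u ∈ Finset.range 3,
      if g2 N (N+1) u = 0 then (sv N ++ [(1:ℝ)/3, 1/2]).getD (N+1) 0 else 0) = 1 := by
    rw [getD_sv_append' _ (by omega)]
    norm_num [g2, Finset.sum_range_succ]
  have hN : (∑ u ∈ Finset.range 3,
      if g2 N N u = 0 then (sv N ++ [(1:ℝ)/3, 1/2]).getD N 0 else 0) = 1/3 := by
    rw [getD_sv_append' _ le_rfl]
    norm_num [g2, Finset.sum_range_succ]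
  have hS : ∀ k ∈ Finset.range N,
      (∑ u ∈ Finset.range 3, if g2 N k u = 0 then (sv N ++ [(1:ℝ)/3, 1/2]).getD k 0 else 0)
      = (sv N ++ [(1:ℝ)/3, 1/2]).getD k 0 := by
    intro k hk
    rw [Finset.mem_range] at hk
    norm_num [g2, (by omega : k ≤ N), Finset.sum_range_succ]
  rw [Finset.sum_congr rfl hS, sum_sv_part, hN, hN1]

lemma sumJ2_1 (N : ℕ) :
    ∑ k ∈ Finset.range (N + 2), ∑ u ∈ Finset.range 3,
      (if g2 N k u = 1 then (sv N ++ [(1:ℝ)/3, 1/2]).getD k 0 else 0)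
      = 2 * SS N + 2/3 + 1/2 := by
  rw [Finset.sum_range_succ, Finset.sum_range_succ]
  have hN1 : (∑ u ∈ Finset.range 3,
      if g2 N (N+1) u = 1 then (sv N ++ [(1:ℝ)/3, 1/2]).getD (N+1) 0 else 0) = 1/2 := by
    rw [getD_sv_append' _ (by omega)]
    norm_num [g2, Finset.sum_range_succ]
  have hN : (∑ u ∈ Finset.range 3,
      if g2 N N u = 1 then (sv N ++ [(1:ℝ)/3, 1/2]).getD N 0 else 0) = 2/3 := by
    rw [getD_sv_append' _ le_rfl]
    norm_num [g2, Finset.sum_range_succ]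
  have hS : ∀ k ∈ Finset.range N,
      (∑ u ∈ Finset.range 3, if g2 N k u = 1 then (sv N ++ [(1:ℝ)/3, 1/2]).getD k 0 else 0)
      = 2 * ((sv N ++ [(1:ℝ)/3, 1/2]).getD k 0) := by
    intro k hk
    rw [Finset.mem_range] at hk
    norm_num [g2, (by omega : k ≤ N), Finset.sum_range_succ]
    ring
  rw [Finset.sum_congr rfl hS, ← Finset.mul_sum, sum_sv_part, hN, hN1]

lemma sumJ0 (N : ℕ) (L : List ℝ) :
    ∑ k ∈ Finset.range (N + L.length), ∑ u ∈ Finset.range 1,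
      (if g0 k u = 0 then (sv N ++ L).getD k 0 else 0)
      = SS N + ∑ m ∈ Finset.range L.length, L.getD m 0 := by
  have h : ∀ k, (∑ u ∈ Finset.range 1, if g0 k u = 0 then (sv N ++ L).getD k 0 else 0)
      = (sv N ++ L).getD k 0 := by
    intro k; simp [g0]
  rw [Finset.sum_congr rfl fun k _ => h k, Finset.sum_range_add, sum_sv_part]
  congr 1
  apply Finset.sum_congr rfl
  intro m _
  rw [getD_sv_append' _ (by omega)]
  congr 1
  omega

lemma instI_eq (M N : ℕ) (hN : 1 ≤ N) : instI M N 1 = blocks (sv N) M := by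
  rw [instI, blocks, sv, List.flatMap_map, show N - 1 + 1 = N from by omega]

lemma listJ3 (M N : ℕ) (hN : 1 ≤ N) :
    instI M N 1 ++ List.replicate M ((1:ℝ)/3) = blocks (sv N ++ [(1:ℝ)/3]) M := by
  rw [blocks_append, blocks_singleton, instI_eq M N hN]

lemma listJ2 (M N : ℕ) (hN : 1 ≤ N) :
    instI M N 1 ++ List.replicate M ((1:ℝ)/3) ++ List.replicate M ((1:ℝ)/2)
      = blocks (sv N ++ [(1:ℝ)/3, (1:ℝ)/2]) M := by
  rw [show sv N ++ [(1:ℝ)/3, (1:ℝ)/2] = (sv N ++ [(1:ℝ)/3]) ++ [(1:ℝ)/2] from by simp,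
    blocks_append, blocks_singleton, listJ3 M N hN]

lemma listJ22 (M N : ℕ) (hN : 1 ≤ N) :
    instI M N 1 ++ List.replicate M ((1:ℝ)/3) ++ List.replicate (2*M) ((1:ℝ)/2)
      = blocks (sv N ++ [(1:ℝ)/3, (1:ℝ)/2, (1:ℝ)/2]) M := by
  rw [show sv N ++ [(1:ℝ)/3, (1:ℝ)/2, (1:ℝ)/2]
      = ((sv N ++ [(1:ℝ)/3]) ++ [(1:ℝ)/2]) ++ [(1:ℝ)/2] from by simp,
    blocks_append, blocks_append, blocks_singleton, listJ3 M N hN,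
    show 2*M = M + M from two_mul M, List.replicate_add, ← List.append_assoc]

lemma listJ1 (M N : ℕ) (hN : 1 ≤ N) :
    instI M N 1 ++ List.replicate M ((1:ℝ)/3) ++ List.replicate M ((1:ℝ)/2)
      ++ List.replicate M ((1:ℝ))
      = blocks (sv N ++ [(1:ℝ)/3, (1:ℝ)/2, (1:ℝ)]) M := by
  rw [show sv N ++ [(1:ℝ)/3, (1:ℝ)/2, (1:ℝ)]
      = (sv N ++ [(1:ℝ)/3, (1:ℝ)/2]) ++ [(1:ℝ)] from by simp,
    blocks_append, blocks_singleton, listJ2 M N hN]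

lemma sv_append_nonneg (N : ℕ) (L : List ℝ) (hL : ∀ x ∈ L, 0 ≤ x) :
    ∀ x ∈ sv N ++ L, 0 ≤ x := by
  intro x hx
  rcases List.mem_append.mp hx with h | h
  · rw [sv] at h; simp at h; obtain ⟨j, _, rfl⟩ := h; positivity
  · exact hL x h

lemma hlastJ3 (N H : ℕ) (hN : 0 < N) (hH : 0 < H) :
    ∀ i < (sv N ++ [(1:ℝ)/3]).length * (8 * H),
      ∃ j, i ≤ j ∧ j < (sv N ++ [(1:ℝ)/3]).length * (8 * H) ∧
        pack (8 * H) 8 H (g3 N) j = pack (8 * H) 8 H (g3 N) i ∧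
        (∑ k ∈ Finset.range (sv N ++ [(1:ℝ)/3]).length, ∑ u ∈ Finset.range 8,
          (if g3 N k u = g3 N (i / (8 * H)) (i % (8 * H) % 8)
            then (sv N ++ [(1:ℝ)/3]).getD k 0 else 0))
          < 1 + (sv N ++ [(1:ℝ)/3]).getD (j / (8 * H)) 0 := by
  intro i hi
  have hvl : (sv N ++ [(1:ℝ)/3]).length = N + 1 := by simp [sv]
  have hM : 0 < 8 * H := by omega
  have hu8 : i % (8 * H) % 8 < 8 := Nat.mod_lt _ (by omega)
  have hkN : i / (8 * H) < N + 1 := by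
    rw [Nat.div_lt_iff_lt_mul hM]; rw [hvl] at hi; exact hi
  rcases lt_or_ge (i / (8 * H)) N with hkn | hkn
  · rcases lt_or_ge (i % (8 * H) % 8) 2 with h2 | h2
    · have hc : g3 N (i / (8 * H)) (i % (8 * H) % 8) = 0 := by
        simp only [g3]; split_ifs <;> omega
      refine core _ 8 H (by norm_num) hH (g3 N) N hvl i hi 2 (by norm_num) ?_ ?_ ?_
      · rw [hc]; simp only [g3]; split_ifs <;> omega
      · intro h; omega
      · rw [hc, hvl, sumJ3_0, getD_sv_append' _ le_rfl]
        simp [Nat.sub_self]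
        linarith [SS_lt N]
    · rcases lt_or_ge (i % (8 * H) % 8) 4 with h4 | h4
      · have hc : g3 N (i / (8 * H)) (i % (8 * H) % 8) = 1 := by
          simp only [g3]; split_ifs <;> omega
        refine core _ 8 H (by norm_num) hH (g3 N) N hvl i hi 5 (by norm_num) ?_ ?_ ?_
        · rw [hc]; simp only [g3]; split_ifs <;> omega
        · intro h; omega
        · rw [hc, hvl, sumJ3_1, getD_sv_append' _ le_rfl]
          simp [Nat.sub_self]
          linarith [SS_lt N]
      · have hc : g3 N (i / (8 * H)) (i % (8 * H) % 8) = 2 := by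
          simp only [g3]; split_ifs <;> omega
        refine core _ 8 H (by norm_num) hH (g3 N) N hvl i hi 7 (by norm_num) ?_ ?_ ?_
        · rw [hc]; simp only [g3]; split_ifs <;> omega
        · intro h; omega
        · rw [hc, hvl, sumJ3_2, getD_sv_append' _ le_rfl]
          simp [Nat.sub_self]
          linarith [SS_lt N]
  · rcases lt_or_ge (i % (8 * H) % 8) 3 with h3 | h3
    · have hc : g3 N (i / (8 * H)) (i % (8 * H) % 8) = 0 := by
        simp only [g3]; split_ifs <;> omega
      refine core _ 8 H (by norm_num) hH (g3 N) N hvl i hi 2 (by norm_num) ?_ ?_ ?_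
      · rw [hc]; simp only [g3]; split_ifs <;> omega
      · intro h; omega
      · rw [hc, hvl, sumJ3_0, getD_sv_append' _ le_rfl]
        simp [Nat.sub_self]
        linarith [SS_lt N]
    · rcases lt_or_ge (i % (8 * H) % 8) 6 with h6 | h6
      · have hc : g3 N (i / (8 * H)) (i % (8 * H) % 8) = 1 := by
          simp only [g3]; split_ifs <;> omega
        refine core _ 8 H (by norm_num) hH (g3 N) N hvl i hi 5 (by norm_num) ?_ ?_ ?_
        · rw [hc]; simp only [g3]; split_ifs <;> omega
        · intro h; omega
        · rw [hc, hvl, sumJ3_1, getD_sv_append' _ le_rfl]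
          simp [Nat.sub_self]
          linarith [SS_lt N]
      · have hc : g3 N (i / (8 * H)) (i % (8 * H) % 8) = 2 := by
          simp only [g3]; split_ifs <;> omega
        refine core _ 8 H (by norm_num) hH (g3 N) N hvl i hi 7 (by norm_num) ?_ ?_ ?_
        · rw [hc]; simp only [g3]; split_ifs <;> omega
        · intro h; omega
        · rw [hc, hvl, sumJ3_2, getD_sv_append' _ le_rfl]
          simp [Nat.sub_self]
          linarith [SS_lt N]

lemma hlastJ2 (N H : ℕ) (hH : 0 < H) :
    ∀ i < (sv N ++ [(1:ℝ)/3, (1:ℝ)/2]).length * (3 * H),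
      ∃ j, i ≤ j ∧ j < (sv N ++ [(1:ℝ)/3, (1:ℝ)/2]).length * (3 * H) ∧
        pack (3 * H) 3 H (g2 N) j = pack (3 * H) 3 H (g2 N) i ∧
        (∑ k ∈ Finset.range (sv N ++ [(1:ℝ)/3, (1:ℝ)/2]).length, ∑ u ∈ Finset.range 3,
          (if g2 N k u = g2 N (i / (3 * H)) (i % (3 * H) % 3)
            then (sv N ++ [(1:ℝ)/3, (1:ℝ)/2]).getD k 0 else 0))
          < 1 + (sv N ++ [(1:ℝ)/3, (1:ℝ)/2]).getD (j / (3 * H)) 0 := by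
  intro i hi
  have hvl : (sv N ++ [(1:ℝ)/3, (1:ℝ)/2]).length = (N + 1) + 1 := by simp [sv]
  have hM : 0 < 3 * H := by omega
  have hu3 : i % (3 * H) % 3 < 3 := Nat.mod_lt _ (by omega)
  have hkN : i / (3 * H) < N + 2 := by
    rw [Nat.div_lt_iff_lt_mul hM]; rw [hvl] at hi
    calc i < ((N+1)+1) * (3*H) := hi
      _ = (N+2) * (3*H) := by ring
  have hsum0 : ∑ k ∈ Finset.range (N + 2), ∑ u ∈ Finset.range 3,
      (if g2 N k u = 0 then (sv N ++ [(1:ℝ)/3, (1:ℝ)/2]).getD k 0 else 0)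
      = SS N + 1/3 + 1 := sumJ2_0 N
  have hsum1 : ∑ k ∈ Finset.range (N + 2), ∑ u ∈ Finset.range 3,
      (if g2 N k u = 1 then (sv N ++ [(1:ℝ)/3, (1:ℝ)/2]).getD k 0 else 0)
      = 2 * SS N + 2/3 + 1/2 := sumJ2_1 N
  have hvl' : (N + 1) + 1 = N + 2 := by omega
  rcases Nat.lt_or_ge (i % (3 * H) % 3) 1 with h1 | h1
  · -- u = 0, c = 0, e = 1
    have hc : g2 N (i / (3 * H)) (i % (3 * H) % 3) = 0 := by
      simp only [g2]; split_ifs <;> omega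
    refine core _ 3 H (by norm_num) hH (g2 N) (N+1) hvl i hi 1 (by norm_num) ?_ ?_ ?_
    · rw [hc]; simp only [g2]; split_ifs <;> omega
    · intro h; omega
    · rw [hc, hvl, hvl', hsum0, getD_sv_append' _ (by omega)]
      simp [show N + 1 - N = 1 from by omega]
      linarith [SS_lt N]
  · rcases Nat.lt_or_ge (i / (3 * H)) (N + 1) with hk | hk
    · -- k ≤ N, u ≥ 1 : c = 1, e = 2
      have hc : g2 N (i / (3 * H)) (i % (3 * H) % 3) = 1 := by
        simp only [g2]; split_ifs <;> omega
      refine core _ 3 H (by norm_num) hH (g2 N) (N+1) hvl i hi 2 (by norm_num) ?_ ?_ ?_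
      · rw [hc]; simp only [g2]; split_ifs <;> omega
      · intro h; omega
      · rw [hc, hvl, hvl', hsum1, getD_sv_append' _ (by omega)]
        simp [show N + 1 - N = 1 from by omega]
        linarith [SS_lt N]
    · -- k = N+1 (halves), u ≥ 1
      rcases Nat.lt_or_ge (i % (3 * H) % 3) 2 with h2 | h2
      · -- u = 1 : c = 0, e = 1
        have hc : g2 N (i / (3 * H)) (i % (3 * H) % 3) = 0 := by
          simp only [g2]; split_ifs <;> omega
        refine core _ 3 H (by norm_num) hH (g2 N) (N+1) hvl i hi 1 (by norm_num) ?_ ?_ ?_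
        · rw [hc]; simp only [g2]; split_ifs <;> omega
        · intro h; omega
        · rw [hc, hvl, hvl', hsum0, getD_sv_append' _ (by omega)]
          simp [show N + 1 - N = 1 from by omega]
          linarith [SS_lt N]
      · -- u = 2 : c = 1, e = 2
        have hc : g2 N (i / (3 * H)) (i % (3 * H) % 3) = 1 := by
          simp only [g2]; split_ifs <;> omega
        refine core _ 3 H (by norm_num) hH (g2 N) (N+1) hvl i hi 2 (by norm_num) ?_ ?_ ?_
        · rw [hc]; simp only [g2]; split_ifs <;> omega
        · intro h; omega
        · rw [hc, hvl, hvl', hsum1, getD_sv_append' _ (by omega)]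
          simp [show N + 1 - N = 1 from by omega]
          linarith [SS_lt N]

lemma hlastJ0 (N H : ℕ) (hH : 0 < H) (a b c : ℝ)
    (hsum : SS N + (a + (b + (c + 0))) < 1 + c) :
    ∀ i < (sv N ++ [a, b, c]).length * (1 * H),
      ∃ j, i ≤ j ∧ j < (sv N ++ [a, b, c]).length * (1 * H) ∧
        pack (1 * H) 1 H g0 j = pack (1 * H) 1 H g0 i ∧
        (∑ k ∈ Finset.range (sv N ++ [a, b, c]).length, ∑ u ∈ Finset.range 1,
          (if g0 k u = g0 (i / (1 * H)) (i % (1 * H) % 1)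
            then (sv N ++ [a, b, c]).getD k 0 else 0))
          < 1 + (sv N ++ [a, b, c]).getD (j / (1 * H)) 0 := by
  intro i hi
  have hvl : (sv N ++ [a, b, c]).length = (N + 2) + 1 := by simp [sv]
  refine core _ 1 H one_pos hH g0 (N+2) hvl i hi 0 one_pos ?_ ?_ ?_
  · rfl
  · intro _; simp [Nat.mod_one]
  · have h0 : g0 (i / (1 * H)) (i % (1 * H) % 1) = 0 := rfl
    rw [h0, hvl, show (N + 2) + 1 = N + ([a, b, c] : List ℝ).length from by simp,
      sumJ0 N [a, b, c], getD_sv_append' _ (by omega)]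
    have hL : ∑ m ∈ Finset.range ([a, b, c] : List ℝ).length, ([a, b, c] : List ℝ).getD m 0
        = a + (b + (c + 0)) := by
      simp [Finset.sum_range_succ]
      ring
    rw [hL, show N + 2 - N = 2 from by omega]
    simpa using hsum

/-- upper bounds on the optimal costs of the inputs `J_3`,
`J_2`, `J_22` and `J_1`. -/
theorem stmt16 (N M : ℕ) (hN : 3 ≤ N) (hM : 3 ≤ M)
    (hdiv : Nat.factorial (7 ^ (N + 1)) ∣ M) :
    (OPT (instI M N 1 ++ List.replicate M ((1 : ℝ) / 3)) : ℝ) ≤ 3 * M / 8 ∧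
    (OPT (instI M N 1 ++ List.replicate M ((1 : ℝ) / 3)
        ++ List.replicate M ((1 : ℝ) / 2)) : ℝ) ≤ 2 * M / 3 ∧
    (OPT (instI M N 1 ++ List.replicate M ((1 : ℝ) / 3)
        ++ List.replicate (2 * M) ((1 : ℝ) / 2)) : ℝ) ≤ M ∧
    (OPT (instI M N 1 ++ List.replicate M ((1 : ℝ) / 3)
        ++ List.replicate M ((1 : ℝ) / 2)
        ++ List.replicate M ((1 : ℝ) : ℝ)) : ℝ) ≤ M := by
  have hM0 : 0 < M := by omega
  have hN1 : 1 ≤ N := by omega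
  have hbig : 2401 ≤ 7 ^ (N + 1) := by
    calc (2401 : ℕ) = 7 ^ 4 := by norm_num
      _ ≤ 7 ^ (N + 1) := Nat.pow_le_pow_right (by norm_num) (by omega)
  have hdvd : ∀ k : ℕ, 0 < k → k ≤ 7 ^ (N + 1) → k ∣ M :=
    fun k hk hle => (Nat.dvd_factorial hk hle).trans hdiv
  obtain ⟨H8, hH8⟩ := hdvd 8 (by norm_num) (by omega)
  obtain ⟨H3, hH3⟩ := hdvd 3 (by norm_num) (by omega)
  have hH8pos : 0 < H8 := by omega
  have hH3pos : 0 < H3 := by omega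
  have hnn3 : ∀ x ∈ sv N ++ [(1:ℝ)/3], 0 ≤ x := by
    apply sv_append_nonneg
    intro x hx; simp at hx; rw [hx]; norm_num
  have hnn2 : ∀ x ∈ sv N ++ [(1:ℝ)/3, (1:ℝ)/2], 0 ≤ x := by
    apply sv_append_nonneg
    intro x hx; simp at hx; rcases hx with rfl | rfl <;> norm_num
  have hnn22 : ∀ x ∈ sv N ++ [(1:ℝ)/3, (1:ℝ)/2, (1:ℝ)/2], 0 ≤ x := by
    apply sv_append_nonneg
    intro x hx; simp at hx; rcases hx with rfl | rfl | rfl <;> norm_num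
  have hnn1 : ∀ x ∈ sv N ++ [(1:ℝ)/3, (1:ℝ)/2, (1:ℝ)], 0 ≤ x := by
    apply sv_append_nonneg
    intro x hx; simp at hx; rcases hx with rfl | rfl | rfl <;> norm_num
  refine ⟨?_, ?_, ?_, ?_⟩
  · -- J_3
    have hlist : instI M N 1 ++ List.replicate M ((1:ℝ)/3)
        = blocks (sv N ++ [(1:ℝ)/3]) (8 * H8) := by
      rw [← hH8]; exact listJ3 M N hN1
    have hopt : OPT (instI M N 1 ++ List.replicate M ((1:ℝ)/3)) ≤ 3 * H8 := by
      rw [hlist]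
      exact OPT_blocks_le _ 8 H8 3 (by norm_num) hH8pos (g3 N) (g3_lt N) hnn3
        (hlastJ3 N H8 (by omega) hH8pos)
    calc (OPT (instI M N 1 ++ List.replicate M ((1:ℝ)/3)) : ℝ)
        ≤ ((3 * H8 : ℕ) : ℝ) := Nat.cast_le.mpr hopt
      _ = 3 * (M : ℝ) / 8 := by rw [hH8]; push_cast; ring
  · -- J_2
    have hlist : instI M N 1 ++ List.replicate M ((1:ℝ)/3) ++ List.replicate M ((1:ℝ)/2)
        = blocks (sv N ++ [(1:ℝ)/3, (1:ℝ)/2]) (3 * H3) := by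
      rw [← hH3]; exact listJ2 M N hN1
    have hopt : OPT (instI M N 1 ++ List.replicate M ((1:ℝ)/3)
        ++ List.replicate M ((1:ℝ)/2)) ≤ 2 * H3 := by
      rw [hlist]
      exact OPT_blocks_le _ 3 H3 2 (by norm_num) hH3pos (g2 N) (g2_lt N) hnn2
        (hlastJ2 N H3 hH3pos)
    calc (OPT (instI M N 1 ++ List.replicate M ((1:ℝ)/3)
          ++ List.replicate M ((1:ℝ)/2)) : ℝ)
        ≤ ((2 * H3 : ℕ) : ℝ) := Nat.cast_le.mpr hopt
      _ = 2 * (M : ℝ) / 3 := by rw [hH3]; push_cast; ring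
  · -- J_22
    have hlist : instI M N 1 ++ List.replicate M ((1:ℝ)/3) ++ List.replicate (2*M) ((1:ℝ)/2)
        = blocks (sv N ++ [(1:ℝ)/3, (1:ℝ)/2, (1:ℝ)/2]) (1 * M) := by
      rw [one_mul]; exact listJ22 M N hN1
    have hopt : OPT (instI M N 1 ++ List.replicate M ((1:ℝ)/3)
        ++ List.replicate (2*M) ((1:ℝ)/2)) ≤ 1 * M := by
      rw [hlist]
      exact OPT_blocks_le _ 1 M 1 one_pos hM0 g0 g0_lt hnn22
        (hlastJ0 N M hM0 (1/3) (1/2) (1/2) (by linarith [SS_lt N]))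
    calc (OPT (instI M N 1 ++ List.replicate M ((1:ℝ)/3)
          ++ List.replicate (2*M) ((1:ℝ)/2)) : ℝ)
        ≤ ((1 * M : ℕ) : ℝ) := Nat.cast_le.mpr hopt
      _ = (M : ℝ) := by push_cast; ring
  · -- J_1
    have hlist : instI M N 1 ++ List.replicate M ((1:ℝ)/3) ++ List.replicate M ((1:ℝ)/2)
        ++ List.replicate M ((1:ℝ))
        = blocks (sv N ++ [(1:ℝ)/3, (1:ℝ)/2, (1:ℝ)]) (1 * M) := by
      rw [one_mul]; exact listJ1 M N hN1
    have hopt : OPT (instI M N 1 ++ List.replicate M ((1:ℝ)/3)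
        ++ List.replicate M ((1:ℝ)/2) ++ List.replicate M ((1:ℝ))) ≤ 1 * M := by
      rw [hlist]
      exact OPT_blocks_le _ 1 M 1 one_pos hM0 g0 g0_lt hnn1
        (hlastJ0 N M hM0 (1/3) (1/2) 1 (by linarith [SS_lt N]))
    calc (OPT (instI M N 1 ++ List.replicate M ((1:ℝ)/3)
          ++ List.replicate M ((1:ℝ)/2) ++ List.replicate M ((1:ℝ))) : ℝ)
        ≤ ((1 * M : ℕ) : ℝ) := Nat.cast_le.mpr hopt
      _ = (M : ℝ) := by push_cast; ring

end

end OOEBP
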